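/- Let f : ℝ^d → ℝ be ρ-weakly convex, lsc, bounded below, with 0 < λ < 1/ρ. Let x^{k+1} = x^k - (β_k/‖g(x^k)‖) g(x^k) with g(x^k) ∈ ∂f(x^k) nonzero and β_k > 0. Then for all k, f_λ(x^{k+1}) ≤ f_λ(x^0) + (1/(2λ)) Σ_{j=0}^{k} β_j². -/

import Mathlib

open scoped InnerProductSpace BigOperators

/-- Uniform upper bound on Moreau envelope values along the subgradient trajectory. -/
theorem moreau_values_bounded
    (d : ℕ) (f : EuclideanSpace ℝ (Fin d) → ℝ) (ρ lam : ℝ)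
    (hρ : 0 < ρ) (hlam : 0 < lam) (hlamρ : lam < 1 / ρ)
    (hwc : ConvexOn ℝ Set.univ (fun x => f x + (ρ / 2) * ‖x‖ ^ 2))
    (hlsc : LowerSemicontinuous f)
    (hbdd : BddBelow (Set.range f))
    (flam : EuclideanSpace ℝ (Fin d) → ℝ)
    (p : EuclideanSpace ℝ (Fin d) → EuclideanSpace ℝ (Fin d))
    (hprox : ∀ x y, f (p x) + ‖p x - x‖ ^ 2 / (2 * lam) ≤ f y + ‖y - x‖ ^ 2 / (2 * lam))
    (hflam : ∀ x, flam x = f (p x) + ‖p x - x‖ ^ 2 / (2 * lam))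
    (x g : ℕ → EuclideanSpace ℝ (Fin d)) (β : ℕ → ℝ)
    (hβ : ∀ k, 0 < β k) (hg : ∀ k, g k ≠ 0)
    (hsub : ∀ k y, f (x k) + ⟪g k, y - x k⟫_ℝ - (ρ / 2) * ‖x k - y‖ ^ 2 ≤ f y)
    (hupd : ∀ k, x (k + 1) = x k - (β k / ‖g k‖) • g k) :
    ∀ k, flam (x (k + 1)) ≤ flam (x 0)
      + (1 / (2 * lam)) * ∑ j ∈ Finset.range (k + 1), (β j) ^ 2 := by
  have hρlam : ρ < 1 / lam := by
    rw [lt_div_iff₀ hlam]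
    rw [lt_div_iff₀ hρ] at hlamρ
    linarith [hlamρ]
  -- one-step descent
  have step : ∀ k, flam (x (k + 1)) ≤ flam (x k) + (β k) ^ 2 / (2 * lam) := by
    intro k
    set q := p (x k) with hq
    -- inner product bound: ⟪g k, q - x k⟫ ≤ 0
    have hip : ⟪g k, q - x k⟫_ℝ ≤ 0 := by
      have h1 := hsub k q
      have h2 := hprox (x k) (x k)
      simp only [sub_self, norm_zero] at h2
      have h2' : f q + ‖q - x k‖ ^ 2 / (2 * lam) ≤ f (x k) := by
        simpa using h2
      have hn : ‖x k - q‖ = ‖q - x k‖ := norm_sub_rev _ _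
      rw [hn] at h1
      set s := ‖q - x k‖ ^ 2 with hs
      have hs0 : 0 ≤ s := sq_nonneg _
      have key : ⟪g k, q - x k⟫_ℝ ≤ (ρ / 2) * s - s / (2 * lam) := by linarith
      have hρl : ρ * lam < 1 := by
        rw [lt_div_iff₀ hlam] at hρlam; linarith
      have hfin : (ρ / 2) * s ≤ s / (2 * lam) := by
        rw [le_div_iff₀ (by linarith : (0:ℝ) < 2 * lam)]
        nlinarith [mul_nonneg (by linarith : (0:ℝ) ≤ 1 - ρ * lam) hs0]
      linarith
    -- expand the squared norm
    have hne : (‖g k‖ : ℝ) ≠ 0 := norm_ne_zero_iff.mpr (hg k)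
    set c : ℝ := β k / ‖g k‖ with hc
    have hcpos : 0 < c := div_pos (hβ k) (norm_pos_iff.mpr (hg k))
    have hdecomp : q - x (k + 1) = (q - x k) + c • g k := by
      rw [hupd k]; abel
    have hexp : ‖q - x (k + 1)‖ ^ 2
        = ‖q - x k‖ ^ 2 + 2 * (c * ⟪g k, q - x k⟫_ℝ) + (β k) ^ 2 := by
      rw [hdecomp, norm_add_sq_real]
      have h1 : ⟪q - x k, c • g k⟫_ℝ = c * ⟪g k, q - x k⟫_ℝ := by
        rw [real_inner_smul_right, real_inner_comm]
      have h2 : ‖c • g k‖ ^ 2 = (β k) ^ 2 := by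
        rw [norm_smul]
        have : |c| = c := abs_of_pos hcpos
        rw [Real.norm_eq_abs, this, mul_pow, hc, div_pow]
        field_simp
      rw [h1, h2]
    have hbound : ‖q - x (k + 1)‖ ^ 2 ≤ ‖q - x k‖ ^ 2 + (β k) ^ 2 := by
      rw [hexp]
      nlinarith [mul_nonpos_of_nonneg_of_nonpos hcpos.le hip]
    have h3 := hprox (x (k + 1)) q
    rw [hflam (x (k + 1)), hflam (x k)]
    have h2lam : 0 < 2 * lam := by linarith
    calc f (p (x (k + 1))) + ‖p (x (k + 1)) - x (k + 1)‖ ^ 2 / (2 * lam)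
        ≤ f q + ‖q - x (k + 1)‖ ^ 2 / (2 * lam) := h3
      _ ≤ f q + (‖q - x k‖ ^ 2 + (β k) ^ 2) / (2 * lam) := by
          gcongr
      _ = f q + ‖q - x k‖ ^ 2 / (2 * lam) + (β k) ^ 2 / (2 * lam) := by ring
  -- induction
  intro k
  induction k with
  | zero =>
    have := step 0
    simp only [zero_add, Finset.range_one, Finset.sum_singleton]
    calc flam (x 1) ≤ flam (x 0) + (β 0) ^ 2 / (2 * lam) := this
      _ = flam (x 0) + 1 / (2 * lam) * (β 0) ^ 2 := by ring
  | succ n ih =>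
    have := step (n + 1)
    rw [Finset.sum_range_succ]
    calc flam (x (n + 1 + 1)) ≤ flam (x (n + 1)) + (β (n + 1)) ^ 2 / (2 * lam) := this
      _ ≤ flam (x 0) + 1 / (2 * lam) * ∑ j ∈ Finset.range (n + 1), (β j) ^ 2
            + (β (n + 1)) ^ 2 / (2 * lam) := by linarith [ih]
      _ = flam (x 0) + 1 / (2 * lam) * (∑ j ∈ Finset.range (n + 1), (β j) ^ 2
            + (β (n + 1)) ^ 2) := by ring
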